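/- Let G be a connected weighted graph with cutset projection 𝒫 and minimum amplification factor α_p(γ) for p ∈ [1,∞] and γ ∈ [0, π/2). Then α_p(γ) ≥ (1 + sinc(γ))/2 − ‖𝒫‖_p · (1 − sinc(γ))/2. -/

import Mathlib

open Matrix

/-- The unnormalized sinc function, `sinc t = sin t / t` with `sinc 0 = 1`. -/
noncomputable def sinc (t : ℝ) : ℝ := if t = 0 then 1 else Real.sin t / t

/-- The `p`-norm of a real vector, for `p ∈ [1,∞]`. -/
noncomputable def pnorm {k : ℕ} (p : ENNReal) [Fact (1 ≤ p)] (v : Fin k → ℝ) : ℝ :=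
  ‖(WithLp.equiv p (Fin k → ℝ)).symm v‖

/-- The induced matrix `p`-norm, i.e. the operator norm of `x ↦ Mx` with respect to the
vector `p`-norm on domain and codomain. -/
noncomputable def matPNorm {k : ℕ} (p : ENNReal) [Fact (1 ≤ p)]
    (M : Matrix (Fin k) (Fin k) ℝ) : ℝ :=
  ‖LinearMap.toContinuousLinearMap
    ((WithLp.linearEquiv p ℝ (Fin k → ℝ)).symm.toLinearMap ∘ₗ M.mulVecLin ∘ₗ
      (WithLp.linearEquiv p ℝ (Fin k → ℝ)).toLinearMap)‖

lemma sinc_abs (t : ℝ) : sinc |t| = sinc t := by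
  rcases le_or_gt 0 t with h | h
  · rw [abs_of_nonneg h]
  · rw [abs_of_neg h]
    unfold sinc
    rw [if_neg (by linarith), if_neg (by linarith)]
    rw [Real.sin_neg]
    ring

lemma sinc_le_one (t : ℝ) : sinc t ≤ 1 := by
  rw [← sinc_abs]
  unfold sinc
  split_ifs with h
  · exact le_rfl
  · have h0 : 0 < |t| := lt_of_le_of_ne (abs_nonneg t) (Ne.symm h)
    rw [div_le_one h0]
    exact Real.sin_le h0.le

lemma sinc_nonneg_of (t : ℝ) (h0 : 0 ≤ t) (h1 : t ≤ Real.pi) : 0 ≤ sinc t := by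
  unfold sinc
  split_ifs with h
  · norm_num
  · exact div_nonneg (Real.sin_nonneg_of_nonneg_of_le_pi h0 h1) h0

/-- sinc is antitone on `[0, π/2)`: if `0 ≤ s ≤ γ < π/2` then `sinc γ ≤ sinc s`. -/
lemma sinc_anti (s γ : ℝ) (hs : 0 ≤ s) (hsγ : s ≤ γ) (hγ : γ < Real.pi / 2) :
    sinc γ ≤ sinc s := by
  rcases eq_or_lt_of_le hs with rfl | hspos
  · simpa [sinc] using sinc_le_one γ
  · have hγpos : 0 < γ := lt_of_lt_of_le hspos hsγ
    have hγπ : γ ≤ Real.pi := le_trans hγ.le (by linarith [Real.pi_pos])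
    unfold sinc
    rw [if_neg (ne_of_gt hspos), if_neg (ne_of_gt hγpos)]
    rw [div_le_div_iff₀ hγpos hspos]
    -- want sin γ * s ≤ sin s * γ
    have hconc := strictConcaveOn_sin_Icc.concaveOn
    have hmem0 : (0 : ℝ) ∈ Set.Icc 0 Real.pi := ⟨le_rfl, Real.pi_pos.le⟩
    have hmemγ : γ ∈ Set.Icc 0 Real.pi := ⟨hγpos.le, hγπ⟩
    have ha' : (0 : ℝ) ≤ 1 - s / γ := by
      have : s / γ ≤ 1 := (div_le_one hγpos).2 hsγ
      linarith
    have hb' : (0 : ℝ) ≤ s / γ := by positivity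
    have hab : (1 - s / γ) + s / γ = 1 := by ring
    have key := hconc.2 hmem0 hmemγ ha' hb' hab
    simp only [smul_eq_mul, mul_zero, Real.sin_zero, add_zero, zero_add] at key
    have hsgg : s / γ * γ = s := by field_simp
    rw [hsgg] at key
    calc Real.sin γ * s = (s / γ * Real.sin γ) * γ := by field_simp
      _ ≤ Real.sin s * γ := mul_le_mul_of_nonneg_right key hγpos.le

lemma pnorm_nonneg {k : ℕ} (p : ENNReal) [Fact (1 ≤ p)] (v : Fin k → ℝ) :
    0 ≤ pnorm p v := norm_nonneg _

lemma pnorm_smul {k : ℕ} (p : ENNReal) [Fact (1 ≤ p)] (c : ℝ) (v : Fin k → ℝ) :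
    pnorm p (c • v) = |c| * pnorm p v := by
  unfold pnorm
  rw [show (WithLp.equiv p (Fin k → ℝ)).symm (c • v) = c • (WithLp.equiv p (Fin k → ℝ)).symm v from rfl, norm_smul, Real.norm_eq_abs]

lemma le_pnorm_add {k : ℕ} (p : ENNReal) [Fact (1 ≤ p)] (x y : Fin k → ℝ) :
    pnorm p x - pnorm p y ≤ pnorm p (x + y) := by
  unfold pnorm
  rw [show (WithLp.equiv p (Fin k → ℝ)).symm (x + y) = (WithLp.equiv p (Fin k → ℝ)).symm x + (WithLp.equiv p (Fin k → ℝ)).symm y from rfl]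
  have := norm_add_le ((WithLp.equiv p (Fin k → ℝ)).symm x + (WithLp.equiv p (Fin k → ℝ)).symm y)
    (-(WithLp.equiv p (Fin k → ℝ)).symm y)
  simp only [add_neg_cancel_right, norm_neg] at this
  linarith

lemma pnorm_mono {k : ℕ} (p : ENNReal) [Fact (1 ≤ p)] (v w : Fin k → ℝ)
    (h : ∀ i, |v i| ≤ |w i|) : pnorm p v ≤ pnorm p w := by
  unfold pnorm
  rcases eq_or_ne p (⊤ : ENNReal) with rfl | hp
  · rw [PiLp.norm_eq_ciSup, PiLp.norm_eq_ciSup]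
    rcases isEmpty_or_nonempty (Fin k) with hk | hk
    · simp [Real.iSup_of_isEmpty]
    · apply ciSup_le
      intro i
      refine le_trans ?_ (le_ciSup (Set.Finite.bddAbove (Set.finite_range _)) i)
      simpa [Real.norm_eq_abs] using h i
  · have hq : 0 < p.toReal := ENNReal.toReal_pos (by
      intro h0
      have := Fact.out (p := 1 ≤ p)
      simp [h0] at this) hp
    rw [PiLp.norm_eq_sum hq, PiLp.norm_eq_sum hq]
    apply Real.rpow_le_rpow (by positivity)
    · apply Finset.sum_le_sum
      intro i _
      apply Real.rpow_le_rpow (norm_nonneg _)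
      · simpa [Real.norm_eq_abs] using h i
      · exact hq.le
    · positivity

lemma pnorm_apply_le {k : ℕ} (p : ENNReal) [Fact (1 ≤ p)] (v : Fin k → ℝ) (i : Fin k) :
    |v i| ≤ pnorm p v := by
  unfold pnorm
  rcases eq_or_ne p (⊤ : ENNReal) with rfl | hp
  · rw [PiLp.norm_eq_ciSup]
    refine le_trans ?_ (le_ciSup (Set.Finite.bddAbove (Set.finite_range _)) i)
    simp [Real.norm_eq_abs]
  · have hq : 0 < p.toReal := ENNReal.toReal_pos (by
      intro h0
      have := Fact.out (p := 1 ≤ p)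
      simp [h0] at this) hp
    rw [PiLp.norm_eq_sum hq]
    have h1 : |v i| = (|v i| ^ p.toReal) ^ (1 / p.toReal) := by
      rw [one_div, Real.rpow_rpow_inv (abs_nonneg _) (ne_of_gt hq)]
    rw [h1]
    apply Real.rpow_le_rpow (by positivity)
    · refine Finset.single_le_sum (f := fun j => ‖(WithLp.equiv p (Fin k → ℝ)).symm v j‖ ^ p.toReal)
        (fun j _ => by positivity) (Finset.mem_univ i) |>.trans_eq' ?_
      simp [Real.norm_eq_abs]
    · positivity

lemma pnorm_mulVec_le {k : ℕ} (p : ENNReal) [Fact (1 ≤ p)]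
    (M : Matrix (Fin k) (Fin k) ℝ) (v : Fin k → ℝ) :
    pnorm p (M.mulVec v) ≤ matPNorm p M * pnorm p v := by
  have := ContinuousLinearMap.le_opNorm
    (LinearMap.toContinuousLinearMap
      ((WithLp.linearEquiv p ℝ (Fin k → ℝ)).symm.toLinearMap ∘ₗ M.mulVecLin ∘ₗ
        (WithLp.linearEquiv p ℝ (Fin k → ℝ)).toLinearMap))
    ((WithLp.equiv p (Fin k → ℝ)).symm v)
  simpa [pnorm, matPNorm, Matrix.mulVecLin_apply, WithLp.linearEquiv] using this

/-- For a connected weighted graph with cutset projection `𝒫`, the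
minimum amplification factor satisfies
`α_p(γ) ≥ (1 + sinc γ)/2 − ‖𝒫‖_p (1 − sinc γ)/2`, i.e. the right-hand side is a lower
bound for `‖𝒫 diag(sinc y) z‖_p` over all `y ∈ Im(Bᵀ)` with `‖y‖_p ≤ γ` and all
`z ∈ Im(Bᵀ)` with `‖z‖_p = 1`. -/
theorem min_amplification_general_lower_bound
    (n m : ℕ) (B : Matrix (Fin n) (Fin m) ℝ) (a : Fin m → ℝ)
    (ha : ∀ e, 0 < a e)
    (hconn : ∀ x : Fin n → ℝ, Bᵀ.mulVec x = 0 ↔ ∃ c : ℝ, x = fun _ => c)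
    (L Ldag : Matrix (Fin n) (Fin n) ℝ)
    (hL : L = B * Matrix.diagonal a * Bᵀ)
    (hmp1 : L * Ldag * L = L) (hmp2 : Ldag * L * Ldag = Ldag)
    (hmp3 : (L * Ldag)ᵀ = L * Ldag) (hmp4 : (Ldag * L)ᵀ = Ldag * L)
    (P : Matrix (Fin m) (Fin m) ℝ)
    (hP : P = Bᵀ * Ldag * B * Matrix.diagonal a)
    (γ : ℝ) (hγ : 0 ≤ γ ∧ γ < Real.pi / 2)
    (p : ENNReal) [Fact (1 ≤ p)] :
    ∀ y z : Fin m → ℝ,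
      (∃ ξ : Fin n → ℝ, y = Bᵀ.mulVec ξ) → pnorm p y ≤ γ →
      (∃ ξ : Fin n → ℝ, z = Bᵀ.mulVec ξ) → pnorm p z = 1 →
      (1 + sinc γ) / 2 - matPNorm p P * ((1 - sinc γ) / 2) ≤
        pnorm p (P.mulVec (fun e => sinc (y e) * z e)) := by
  obtain ⟨hγ0, hγπ⟩ := hγ
  intro y z hy hyn hz hzn
  obtain ⟨ζ, rfl⟩ := hz
  -- Step 1: P fixes Im(Bᵀ)
  have hker : ∀ x : Fin n → ℝ, L.mulVec x = 0 → Bᵀ.mulVec x = 0 := by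
    intro x hx
    have h0 : x ⬝ᵥ L.mulVec x = 0 := by rw [hx]; simp
    have hexp : x ⬝ᵥ L.mulVec x = ∑ e, a e * (Bᵀ.mulVec x e) ^ 2 := by
      rw [hL, ← Matrix.mulVec_mulVec, ← Matrix.mulVec_mulVec, Matrix.dotProduct_mulVec,
        ← Matrix.mulVec_transpose]
      simp only [dotProduct, Matrix.mulVec_diagonal]
      apply Finset.sum_congr rfl
      intro e _
      ring
    rw [hexp] at h0
    funext e
    have := (Finset.sum_eq_zero_iff_of_nonneg (fun e _ => mul_nonneg (ha e).le (sq_nonneg _))).1 h0 e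
      (Finset.mem_univ e)
    have hae := ha e
    have : (Bᵀ.mulVec x e) ^ 2 = 0 := by
      by_contra hne
      have : 0 < (Bᵀ.mulVec x e) ^ 2 := lt_of_le_of_ne (by positivity) (Ne.symm hne)
      nlinarith
    exact pow_eq_zero_iff (n := 2) (by norm_num) |>.1 this
  have hfix : ∀ ξ : Fin n → ℝ, P.mulVec (Bᵀ.mulVec ξ) = Bᵀ.mulVec ξ := by
    intro ξ
    have hx : L.mulVec ((Ldag * L).mulVec ξ - ξ) = 0 := by
      rw [Matrix.mulVec_sub, Matrix.mulVec_mulVec, ← Matrix.mul_assoc, hmp1, sub_self]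
    have hBt := hker _ hx
    rw [Matrix.mulVec_sub, Matrix.mulVec_mulVec, sub_eq_zero] at hBt
    rw [hP]
    rw [Matrix.mulVec_mulVec]
    calc (Bᵀ * Ldag * B * Matrix.diagonal a * Bᵀ).mulVec ξ
        = (Bᵀ * (Ldag * L)).mulVec ξ := by rw [hL]; simp only [Matrix.mul_assoc]
      _ = Bᵀ.mulVec ξ := hBt
  -- Step 2: sinc bounds
  have hsinc_bound : ∀ e, |sinc (y e) - (1 + sinc γ) / 2| ≤ (1 - sinc γ) / 2 := by
    intro e
    have hye : |y e| ≤ γ := le_trans (pnorm_apply_le p y e) hyn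
    have h1 : sinc (y e) ≤ 1 := sinc_le_one _
    have h2 : sinc γ ≤ sinc (y e) := by
      rw [← sinc_abs (y e)]
      exact sinc_anti _ _ (abs_nonneg _) hye hγπ
    rw [abs_le]
    constructor <;> linarith
  have hsγ1 : sinc γ ≤ 1 := sinc_le_one γ
  have hsγ0 : 0 ≤ sinc γ := sinc_nonneg_of γ hγ0 (by linarith [Real.pi_pos])
  set c : ℝ := (1 + sinc γ) / 2 with hc
  set d : ℝ := (1 - sinc γ) / 2 with hd
  set z : Fin m → ℝ := Bᵀ.mulVec ζ with hzdef
  set w : Fin m → ℝ := fun e => (sinc (y e) - c) * z e with hw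
  have hdecomp : (fun e => sinc (y e) * z e) = c • z + w := by
    funext e
    simp only [hw, Pi.add_apply, Pi.smul_apply, smul_eq_mul]
    ring
  have hPdecomp : P.mulVec (fun e => sinc (y e) * z e) = c • z + P.mulVec w := by
    rw [hdecomp, Matrix.mulVec_add, Matrix.mulVec_smul, hfix ζ]
  rw [hPdecomp]
  have hd0 : (0 : ℝ) ≤ d := by rw [hd]; linarith
  have hc0 : (0 : ℝ) ≤ c := by rw [hc]; linarith
  have hwle : pnorm p w ≤ d := by
    have hds : pnorm p (d • z) = d := by
      rw [pnorm_smul, hzn, mul_one, abs_of_nonneg hd0]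
    rw [← hds]
    apply pnorm_mono
    intro i
    simp only [hw, Pi.smul_apply, smul_eq_mul, abs_mul]
    apply mul_le_mul_of_nonneg_right _ (abs_nonneg _)
    rw [abs_of_nonneg hd0]
    exact hsinc_bound i
  have hPw : pnorm p (P.mulVec w) ≤ matPNorm p P * d := by
    refine le_trans (pnorm_mulVec_le p P w) ?_
    apply mul_le_mul_of_nonneg_left hwle (norm_nonneg _)
  have hcz : pnorm p (c • z) = c := by
    rw [pnorm_smul, hzn, mul_one, abs_of_nonneg hc0]
  have := le_pnorm_add p (c • z) (P.mulVec w)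
  rw [hcz] at this
  linarith
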